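/- Fix Υ > 0 and let g_n, g ∈ S^Υ be such that ∫_{Z_T} φ g_n dν_T → ∫_{Z_T} φ g dν_T for every continuous function φ : Z_T → ℝ with compact support. Then lim_{n→∞} ∫_{Z_T} h(s,z)(g_n(s,z) − 1) ν(dz) ds = ∫_{Z_T} h(s,z)(g(s,z) − 1) ν(dz) ds. -/

import Mathlib

open MeasureTheory Filter Topology
open scoped ENNReal

/-- The measure `λ_T ⊗ ν` on `Z_T = [0,T] × Z`. -/
noncomputable def nuT {Z : Type*} [MeasurableSpace Z] (T : ℝ) (ν : Measure Z) :
    Measure (ℝ × Z) := (volume.restrict (Set.Icc 0 T)).prod ν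

/-- The set `S^Υ` of nonnegative measurable functions `g` on `(Z_T, ν_T)` with
`∫ ℓ(g) dν_T ≤ Υ`, where `ℓ(r) = r log r − r + 1`. -/
def entS {X : Type*} [MeasurableSpace X] (μ : Measure X) (Υ : ℝ) : Set (X → ℝ) :=
  {g | Measurable g ∧ (∀ x, 0 ≤ g x) ∧
    ∫⁻ x, ENNReal.ofReal (g x * Real.log (g x) - g x + 1) ∂μ ≤ ENNReal.ofReal Υ}


/-- Young-type inequality: `a(r-1) ≤ ℓ(r) + e^a - a - 1`. -/
lemma young_ent (a r : ℝ) (hr : 0 ≤ r) :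
    a * (r - 1) ≤ (r * Real.log r - r + 1) + (Real.exp a - a - 1) := by
  rcases eq_or_lt_of_le hr with h0 | h0
  · simp only [← h0]
    simp
    nlinarith [Real.exp_pos a]
  · have key : r * ((a - Real.log r) + 1) ≤ r * Real.exp (a - Real.log r) :=
      mul_le_mul_of_nonneg_left (Real.add_one_le_exp _) hr
    have : r * Real.exp (a - Real.log r) = Real.exp a := by
      rw [Real.exp_sub, Real.exp_log h0]
      field_simp
    nlinarith

lemma ell_nonneg (r : ℝ) (hr : 0 ≤ r) : 0 ≤ r * Real.log r - r + 1 := by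
  have := young_ent 0 r hr
  simpa using this

/-- `|a| |r-1| ≤ ℓ(r) + (e^|a| + e^{-|a|} - 2)`. -/
lemma abs_young_ent (a r : ℝ) (hr : 0 ≤ r) :
    |a| * |r - 1| ≤ (r * Real.log r - r + 1) + (Real.exp |a| + Real.exp (-|a|) - 2) := by
  have h1 := young_ent |a| r hr
  have h2 := young_ent (-|a|) r hr
  have e1 : 1 + |a| ≤ Real.exp |a| := by linarith [Real.add_one_le_exp |a|]
  have e2 : 1 - |a| ≤ Real.exp (-|a|) := by linarith [Real.add_one_le_exp (-|a|)]
  rcases abs_cases (r - 1) with ⟨h, _⟩ | ⟨h, _⟩ <;> rw [h] <;> nlinarith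

lemma cosh_quad (x : ℝ) (hx : 0 ≤ x) :
    Real.exp x + Real.exp (-x) - 2 ≤ x ^ 2 * Real.exp x := by
  set u := Real.exp x with hu'
  set v := Real.exp (-x) with hv'
  have huv : u * v = 1 := by rw [hu', hv', ← Real.exp_add]; simp
  have hv : 1 - x ≤ v := by linarith [Real.add_one_le_exp (-x)]
  have hu : 1 ≤ u := Real.one_le_exp hx
  have hup : 0 < u := Real.exp_pos _
  have h1 : u - 1 ≤ u * x := by nlinarith
  have h2 : (u - 1) ^ 2 * v ≤ (u * x) ^ 2 * v := by
    have hvp : 0 < v := Real.exp_pos _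
    nlinarith
  have h3 : (u - 1) ^ 2 * v = u + v - 2 := by nlinarith
  have h4 : (u * x) ^ 2 * v = x ^ 2 * u := by nlinarith
  linarith


lemma master_ineq (σ a r : ℝ) (hσ : 0 < σ) (hr : 0 ≤ r) :
    |a| * |r - 1| ≤ (r * Real.log r - r + 1) / σ + σ * a ^ 2 * Real.exp (σ * |a|) := by
  have h1 := abs_young_ent (σ * a) r hr
  have habs : |σ * a| = σ * |a| := by rw [abs_mul, abs_of_pos hσ]
  rw [habs] at h1
  have h2 := cosh_quad (σ * |a|) (by positivity)
  have h3 : (σ * |a|) ^ 2 * Real.exp (σ * |a|) = σ ^ 2 * (a ^ 2 * Real.exp (σ * |a|)) := by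
    rw [mul_pow, sq_abs]; ring
  have hexp : 0 ≤ Real.exp (σ * |a|) := (Real.exp_pos _).le
  have : σ * |a| * |r - 1| ≤ (r * Real.log r - r + 1) + σ ^ 2 * (a ^ 2 * Real.exp (σ * |a|)) := by
    nlinarith
  rw [div_add' _ _ _ hσ.ne', le_div_iff₀ hσ]
  nlinarith

lemma trunc_contract (c x y : ℝ) (hc : 0 ≤ c) (hx : |x| ≤ c) :
    |x - max (-c) (min c y)| ≤ |x - y| := by
  rcases abs_le.mp hx with ⟨h1, h2⟩
  rcases le_total y (-c) with hy | hy
  · rw [max_eq_left (by rw [min_def]; split <;> linarith)]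
    rw [abs_of_nonneg (by linarith), abs_of_nonneg (by linarith)]; linarith
  · rcases le_total c y with hy2 | hy2
    · rw [min_eq_left hy2, max_eq_right (by linarith)]
      rw [abs_of_nonpos (by linarith), abs_of_nonpos (by linarith)]; linarith
    · rw [min_eq_right hy2, max_eq_right hy]

lemma tail_pt (σ M a b : ℝ) (hσ : 0 < σ) (hM : 1 ≤ M) (hb : |b| ≤ 2 * M) (ha : 2 * M < |a|) :
    σ * (a - b) ^ 2 * Real.exp (σ * |a - b|) ≤
      4 / σ * Real.exp (-(2 * σ) * M) * Real.exp (5 * σ * |a|) := by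
  have hx0 : (0:ℝ) < |a| := by linarith
  have h1 : |a - b| ≤ 2 * |a| := by
    calc |a - b| ≤ |a| + |b| := abs_sub a b
      _ ≤ 2 * |a| := by linarith
  have h3 : (a - b) ^ 2 ≤ 4 * |a| ^ 2 := by
    have h := sq_abs (a - b)
    nlinarith [abs_nonneg (a - b)]
  have h4 : σ * |a| ≤ Real.exp (σ * |a|) := by linarith [Real.add_one_le_exp (σ * |a|)]
  have h5 : Real.exp (σ * |a|) * Real.exp (σ * |a|) = Real.exp (2 * σ * |a|) := by
    rw [← Real.exp_add]; ring_nf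
  have h6 : σ ^ 2 * |a| ^ 2 ≤ Real.exp (2 * σ * |a|) := by
    have h6' := mul_le_mul h4 h4 (by positivity) (Real.exp_pos _).le
    nlinarith
  have e1 : Real.exp (σ * |a - b|) ≤ Real.exp (2 * σ * |a|) := by
    apply Real.exp_le_exp.mpr; nlinarith
  have h7 : Real.exp (2 * σ * |a|) * Real.exp (2 * σ * |a|) = Real.exp (4 * σ * |a|) := by
    rw [← Real.exp_add]; ring_nf
  have key1 : σ * (a - b) ^ 2 * Real.exp (σ * |a - b|) ≤ 4 / σ * Real.exp (4 * σ * |a|) := by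
    have hstep : σ * (a - b) ^ 2 * Real.exp (σ * |a - b|)
        ≤ σ * (4 * |a| ^ 2) * Real.exp (2 * σ * |a|) := by gcongr
    refine hstep.trans ?_
    have hs2 : σ * (4 * |a| ^ 2) ≤ 4 / σ * Real.exp (2 * σ * |a|) := by
      rw [div_mul_eq_mul_div, le_div_iff₀ hσ]
      nlinarith
    have := mul_le_mul_of_nonneg_right hs2 (Real.exp_pos (2 * σ * |a|)).le
    calc σ * (4 * |a| ^ 2) * Real.exp (2 * σ * |a|)
        ≤ 4 / σ * Real.exp (2 * σ * |a|) * Real.exp (2 * σ * |a|) := this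
      _ = 4 / σ * Real.exp (4 * σ * |a|) := by rw [mul_assoc, h7]
  refine key1.trans ?_
  have hrhs : 4 / σ * Real.exp (-(2 * σ) * M) * Real.exp (5 * σ * |a|)
      = 4 / σ * Real.exp (-(2 * σ) * M + 5 * σ * |a|) := by
    rw [mul_assoc, ← Real.exp_add]
  rw [hrhs]
  apply mul_le_mul_of_nonneg_left _ (by positivity)
  apply Real.exp_le_exp.mpr
  nlinarith


/-- On a set of finite measure, `∫ g` is finite for `g ∈ S^Υ`. -/
lemma setg_finite {X : Type*} [MeasurableSpace X] (μ : Measure X) (Υ : ℝ)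
    (g : X → ℝ) (hg : g ∈ entS μ Υ) (K : Set X) (hKfin : μ K < ∞) :
    ∫⁻ q in K, ENNReal.ofReal (g q) ∂μ < ∞ := by
  obtain ⟨hgm, hg0, hgΥ⟩ := hg
  have hpt : ∀ q, ENNReal.ofReal (g q) ≤
      ENNReal.ofReal (g q * Real.log (g q) - g q + 1) + ENNReal.ofReal (Real.exp 1 - 1) := by
    intro q
    rw [← ENNReal.ofReal_add (by nlinarith [young_ent 0 (g q) (hg0 q), Real.exp_zero])
      (by nlinarith [Real.add_one_le_exp 1])]
    apply ENNReal.ofReal_le_ofReal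
    nlinarith [young_ent 1 (g q) (hg0 q)]
  calc ∫⁻ q in K, ENNReal.ofReal (g q) ∂μ
      ≤ ∫⁻ q in K, (ENNReal.ofReal (g q * Real.log (g q) - g q + 1)
          + ENNReal.ofReal (Real.exp 1 - 1)) ∂μ := lintegral_mono fun q => hpt q
    _ = ∫⁻ q in K, ENNReal.ofReal (g q * Real.log (g q) - g q + 1) ∂μ
          + ENNReal.ofReal (Real.exp 1 - 1) * μ K := by
        rw [lintegral_add_right _ measurable_const, setLIntegral_const]
    _ ≤ ENNReal.ofReal Υ + ENNReal.ofReal (Real.exp 1 - 1) * μ K := by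
        gcongr
        exact (setLIntegral_le_lintegral _ _).trans hgΥ
    _ < ∞ := by
        apply ENNReal.add_lt_top.mpr
        exact ⟨ENNReal.ofReal_lt_top, ENNReal.mul_lt_top ENNReal.ofReal_lt_top hKfin⟩

/-- Integrability of a function dominated by `C(g+1)` on a finite-measure set `K`,
vanishing outside. -/
lemma integrable_of_dom {X : Type*} [MeasurableSpace X] (μ : Measure X) (Υ C : ℝ) (hC : 0 ≤ C)
    (g : X → ℝ) (hg : g ∈ entS μ Υ) (K : Set X) (hK : MeasurableSet K) (hKfin : μ K < ∞)
    (u : X → ℝ) (hum : Measurable u)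
    (hbd : ∀ q ∈ K, |u q| ≤ C * (g q + 1)) (h0 : ∀ q ∉ K, u q = 0) :
    Integrable u μ := by
  refine ⟨hum.aestronglyMeasurable, ?_⟩
  rw [hasFiniteIntegral_iff_norm]
  have split := (lintegral_add_compl (fun q => ENNReal.ofReal ‖u q‖) hK (μ := μ)).symm
  rw [split]
  have hcompl : ∫⁻ q in Kᶜ, ENNReal.ofReal ‖u q‖ ∂μ = 0 := by
    rw [setLIntegral_eq_zero_iff hK.compl (hum.norm.ennreal_ofReal)]
    · filter_upwards with q
      intro hq
      simp [h0 q hq]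
  rw [hcompl, add_zero]
  calc ∫⁻ q in K, ENNReal.ofReal ‖u q‖ ∂μ
      ≤ ∫⁻ q in K, ENNReal.ofReal C * (ENNReal.ofReal (g q) + 1) ∂μ := by
        apply setLIntegral_mono' hK
        intro q hq
        rw [← ENNReal.ofReal_one, ← ENNReal.ofReal_add (hg.2.1 q) zero_le_one,
          ← ENNReal.ofReal_mul hC]
        exact ENNReal.ofReal_le_ofReal ((Real.norm_eq_abs _ ▸ hbd q hq))
    _ = ENNReal.ofReal C * (∫⁻ q in K, ENNReal.ofReal (g q) ∂μ + μ K) := by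
        rw [lintegral_const_mul' _ _ ENNReal.ofReal_ne_top,
          lintegral_add_right _ measurable_const, setLIntegral_const, one_mul]
    _ < ∞ := by
        apply ENNReal.mul_lt_top ENNReal.ofReal_lt_top
        exact ENNReal.add_lt_top.mpr ⟨setg_finite μ Υ g hg K hKfin, hKfin⟩


lemma bound_S {X : Type*} [MeasurableSpace X] (μ : Measure X) (Υ σ : ℝ) (hσ : 0 < σ)
    (f : X → ℝ) (g : X → ℝ) (hg : g ∈ entS μ Υ) :
    ∫⁻ q, ENNReal.ofReal (|f q| * |g q - 1|) ∂μ ≤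
      ENNReal.ofReal (Υ / σ) +
        ∫⁻ q, ENNReal.ofReal (σ * f q ^ 2 * Real.exp (σ * |f q|)) ∂μ := by
  obtain ⟨hgm, hg0, hgΥ⟩ := hg
  have hmeasℓ : Measurable fun q => ENNReal.ofReal σ⁻¹ *
      ENNReal.ofReal (g q * Real.log (g q) - g q + 1) := by
    apply Measurable.const_mul
    exact ((hgm.mul (Real.measurable_log.comp hgm)).sub hgm |>.add_const 1).ennreal_ofReal
  calc ∫⁻ q, ENNReal.ofReal (|f q| * |g q - 1|) ∂μ
      ≤ ∫⁻ q, (ENNReal.ofReal σ⁻¹ * ENNReal.ofReal (g q * Real.log (g q) - g q + 1)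
          + ENNReal.ofReal (σ * f q ^ 2 * Real.exp (σ * |f q|))) ∂μ := by
        apply lintegral_mono
        intro q
        simp only []
        have h1 := master_ineq σ (f q) (g q) hσ (hg0 q)
        have h2 : (g q * Real.log (g q) - g q + 1) / σ = σ⁻¹ * (g q * Real.log (g q) - g q + 1) := by
          field_simp
        have hel := ell_nonneg (g q) (hg0 q)
        rw [← ENNReal.ofReal_mul (by positivity), ← ENNReal.ofReal_add (by rw [← h2]; positivity) (by positivity)]
        exact ENNReal.ofReal_le_ofReal (by rw [← h2]; exact h1)
    _ = ENNReal.ofReal σ⁻¹ * ∫⁻ q, ENNReal.ofReal (g q * Real.log (g q) - g q + 1) ∂μ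
          + ∫⁻ q, ENNReal.ofReal (σ * f q ^ 2 * Real.exp (σ * |f q|)) ∂μ := by
        rw [lintegral_add_left hmeasℓ, lintegral_const_mul' _ _ ENNReal.ofReal_ne_top]
    _ ≤ ENNReal.ofReal (Υ / σ) + ∫⁻ q, ENNReal.ofReal (σ * f q ^ 2 * Real.exp (σ * |f q|)) ∂μ := by
        gcongr
        calc ENNReal.ofReal σ⁻¹ * ∫⁻ q, ENNReal.ofReal (g q * Real.log (g q) - g q + 1) ∂μ
            ≤ ENNReal.ofReal σ⁻¹ * ENNReal.ofReal Υ := by gcongr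
          _ = ENNReal.ofReal (Υ / σ) := by
              rw [← ENNReal.ofReal_mul (by positivity)]
              rw [div_eq_inv_mul]


lemma ofReal_sq_abs (x : ℝ) : ENNReal.ofReal (|x| ^ 2) = (‖x‖₊ : ℝ≥0∞) ^ (2:ℝ) := by
  rw [← enorm_eq_nnnorm, Real.enorm_eq_ofReal_abs,
    ENNReal.ofReal_rpow_of_nonneg (abs_nonneg x) (by norm_num : (0:ℝ) ≤ 2), Real.rpow_two]

set_option maxHeartbeats 1000000 in
lemma uniform_approx {X : Type*} [TopologicalSpace X] [NormalSpace X] [R1Space X]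
    [WeaklyLocallyCompactSpace X] [MeasurableSpace X] [BorelSpace X]
    (μ : Measure X) [μ.Regular] (Υ : ℝ) (hΥ : 0 < Υ)
    (h : X → ℝ) (hmeas : Measurable h)
    (hL2 : ∫⁻ q, ENNReal.ofReal (|h q| ^ 2) ∂μ < ∞)
    (hexp : ∀ δ > (0:ℝ), ∀ K : Set X, MeasurableSet K → μ K < ∞ →
      ∫⁻ q in K, ENNReal.ofReal (Real.exp (δ * |h q|)) ∂μ < ∞)
    (ε : ℝ) (hε : 0 < ε) :
    ∃ φ : X → ℝ, Continuous φ ∧ HasCompactSupport φ ∧ (∃ C, 0 ≤ C ∧ ∀ q, |φ q| ≤ C) ∧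
      ∀ g ∈ entS μ Υ,
        ∫⁻ q, ENNReal.ofReal (|h q - φ q| * |g q - 1|) ∂μ ≤ ENNReal.ofReal ε := by
  set σ : ℝ := 2 * Υ / ε with hσdef
  have hσ : 0 < σ := by positivity
  have hΥσ : Υ / σ = ε / 2 := by rw [hσdef]; field_simp
  -- the finite-measure set K₀ where |h| > 1
  set K₀ : Set X := {q | 1 < |h q|} with hK₀def
  have hK₀m : MeasurableSet K₀ := measurableSet_lt measurable_const hmeas.abs
  have hK₀fin : μ K₀ < ∞ := by
    have h1 : μ K₀ = ∫⁻ _ in K₀, 1 ∂μ := (setLIntegral_one K₀).symm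
    rw [h1]
    refine lt_of_le_of_lt ?_ hL2
    refine le_trans (setLIntegral_mono' hK₀m fun q hq => ?_) (setLIntegral_le_lintegral _ _)
    rw [show (1:ℝ≥0∞) = ENNReal.ofReal 1 by simp]
    apply ENNReal.ofReal_le_ofReal
    have h2 : 1 < |h q| := hq
    nlinarith
  -- the exponential integral over K₀
  set C₀ : ℝ≥0∞ := ∫⁻ q in K₀, ENNReal.ofReal (Real.exp (5 * σ * |h q|)) ∂μ with hC₀def
  have hC₀fin : C₀ < ∞ := hexp (5 * σ) (by positivity) K₀ hK₀m hK₀fin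
  -- choose M
  obtain ⟨M, hM1, hMbound⟩ : ∃ M : ℝ, 1 ≤ M ∧
      ENNReal.ofReal (4 / σ * Real.exp (-(2 * σ) * M)) * C₀ ≤ ENNReal.ofReal (ε / 4) := by
    have h2 : Tendsto (fun M : ℝ => Real.exp (-(2 * σ) * M)) atTop (𝓝 0) := by
      have h1 : Tendsto (fun M : ℝ => (2 * σ) * M) atTop atTop :=
        Tendsto.const_mul_atTop (by positivity) tendsto_id
      have := Real.tendsto_exp_neg_atTop_nhds_zero.comp h1
      refine this.congr fun M => ?_
      simp [Function.comp, neg_mul]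
    have htend : Tendsto (fun M : ℝ => 4 / σ * Real.exp (-(2 * σ) * M) * C₀.toReal)
        atTop (𝓝 0) := by
      have := (h2.const_mul (4 / σ)).mul_const C₀.toReal
      simpa using this
    have hev : ∀ᶠ M in (atTop : Filter ℝ),
        4 / σ * Real.exp (-(2 * σ) * M) * C₀.toReal < ε / 4 :=
      htend.eventually_lt_const (by positivity)
    obtain ⟨M, hM1, hMlt⟩ := ((eventually_ge_atTop (1:ℝ)).and hev).exists
    refine ⟨M, hM1, ?_⟩
    have hC₀eq : C₀ = ENNReal.ofReal C₀.toReal := (ENNReal.ofReal_toReal hC₀fin.ne).symm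
    rw [hC₀eq, ← ENNReal.ofReal_mul (by positivity)]
    exact ENNReal.ofReal_le_ofReal hMlt.le
  -- Memℒp h 2 μ
  have hL2' : ∫⁻ q, (‖h q‖₊ : ℝ≥0∞) ^ (2:ℝ) ∂μ < ∞ := by
    refine lt_of_eq_of_lt ?_ hL2
    exact lintegral_congr fun q => (ofReal_sq_abs (h q)).symm
  have hmem : MemLp h 2 μ := by
    refine ⟨hmeas.aestronglyMeasurable, ?_⟩
    rw [eLpNorm_eq_lintegral_rpow_enorm_toReal two_ne_zero ENNReal.ofNat_ne_top]
    simp only [ENNReal.toReal_ofNat]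
    exact ENNReal.rpow_lt_top_of_nonneg (by norm_num) hL2'.ne
  -- L² approximation
  set η : ℝ := (ε / 4) / (σ * Real.exp (σ * (4 * M)) + 1) with hηdef
  have hη : 0 < η := by positivity
  obtain ⟨φ₀, φ₀supp, hφ₀close, φ₀cont, _⟩ :=
    hmem.exists_hasCompactSupport_eLpNorm_sub_le ENNReal.ofNat_ne_top
      (ε := ENNReal.ofReal (Real.sqrt η))
      (ENNReal.ofReal_pos.mpr (Real.sqrt_pos.mpr hη)).ne'
  have hφ₀L2 : ∫⁻ q, ENNReal.ofReal (|h q - φ₀ q| ^ 2) ∂μ ≤ ENNReal.ofReal η := by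
    rw [eLpNorm_eq_lintegral_rpow_enorm_toReal two_ne_zero ENNReal.ofNat_ne_top] at hφ₀close
    simp only [ENNReal.toReal_ofNat] at hφ₀close
    have hsq := ENNReal.rpow_le_rpow hφ₀close (show (0:ℝ) ≤ 2 by norm_num)
    rw [← ENNReal.rpow_mul] at hsq
    norm_num at hsq
    calc ∫⁻ q, ENNReal.ofReal (|h q - φ₀ q| ^ 2) ∂μ
        = ∫⁻ q, (‖h q - φ₀ q‖₊ : ℝ≥0∞) ^ (2:ℕ) ∂μ :=
          lintegral_congr fun q => by
            rw [ENNReal.ofReal_pow (abs_nonneg _), ← enorm_eq_nnnorm, Real.enorm_eq_ofReal_abs]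
      _ ≤ ENNReal.ofReal (Real.sqrt η) ^ (2:ℕ) := by exact_mod_cast hsq
      _ = ENNReal.ofReal η := by
          rw [← ENNReal.ofReal_pow (Real.sqrt_nonneg η), Real.sq_sqrt hη.le]
  -- truncation of φ₀
  set u : ℝ → ℝ := fun y => max (-(2 * M)) (min (2 * M) y) with hudef
  have hu0 : u 0 = 0 := by
    rw [hudef]; simp only [min_def, max_def]
    split <;> split <;> linarith
  set φ : X → ℝ := fun q => u (φ₀ q) with hφdef
  have hφcont : Continuous φ := (continuous_const.max (continuous_const.min continuous_id)).comp φ₀cont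
  have hφsupp : HasCompactSupport φ := φ₀supp.comp_left (g := u) hu0
  have hφbd : ∀ q, |φ q| ≤ 2 * M := by
    intro q
    rw [abs_le]
    constructor
    · exact le_max_left _ _
    · exact max_le (by linarith) (min_le_left _ _)
  refine ⟨φ, hφcont, hφsupp, ⟨2 * M, by linarith, hφbd⟩, ?_⟩
  intro g hg
  refine le_trans (bound_S μ Υ σ hσ (fun q => h q - φ q) g hg) ?_
  -- bound the error integral
  set F : X → ℝ≥0∞ := fun q =>
    ENNReal.ofReal (σ * (h q - φ q) ^ 2 * Real.exp (σ * |h q - φ q|)) with hFdef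
  set A : Set X := {q | |h q| ≤ 2 * M} with hAdef
  have hAm : MeasurableSet A := measurableSet_le hmeas.abs measurable_const
  have hsplit : ∫⁻ q, F q ∂μ = ∫⁻ q in A, F q ∂μ + ∫⁻ q in Aᶜ, F q ∂μ :=
    (lintegral_add_compl F hAm).symm
  have hnear : ∫⁻ q in A, F q ∂μ ≤ ENNReal.ofReal (ε / 4) := by
    have hptA : ∀ q ∈ A, F q ≤
        ENNReal.ofReal (σ * Real.exp (σ * (4 * M))) * ENNReal.ofReal (|h q - φ₀ q| ^ 2) := by
      intro q hq
      have hqA : |h q| ≤ 2 * M := hq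
      have ht : |h q - φ q| ≤ |h q - φ₀ q| := trunc_contract (2 * M) (h q) (φ₀ q) (by linarith) hqA
      have hb4 : |h q - φ q| ≤ 4 * M := by
        calc |h q - φ q| ≤ |h q| + |φ q| := abs_sub _ _
          _ ≤ 4 * M := by linarith [hφbd q]
      rw [hFdef, ← ENNReal.ofReal_mul (by positivity)]
      apply ENNReal.ofReal_le_ofReal
      have he : Real.exp (σ * |h q - φ q|) ≤ Real.exp (σ * (4 * M)) :=
        Real.exp_le_exp.mpr (by nlinarith)
      have hsq2 : (h q - φ q) ^ 2 ≤ |h q - φ₀ q| ^ 2 := by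
        rw [← sq_abs (h q - φ q)]
        exact pow_le_pow_left₀ (abs_nonneg _) ht 2
      calc σ * (h q - φ q) ^ 2 * Real.exp (σ * |h q - φ q|)
          ≤ σ * (h q - φ q) ^ 2 * Real.exp (σ * (4 * M)) :=
            mul_le_mul_of_nonneg_left he (by positivity)
        _ = σ * Real.exp (σ * (4 * M)) * (h q - φ q) ^ 2 := by ring
        _ ≤ σ * Real.exp (σ * (4 * M)) * |h q - φ₀ q| ^ 2 :=
            mul_le_mul_of_nonneg_left hsq2 (by positivity)
    calc ∫⁻ q in A, F q ∂μ
        ≤ ∫⁻ q in A, ENNReal.ofReal (σ * Real.exp (σ * (4 * M)))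
            * ENNReal.ofReal (|h q - φ₀ q| ^ 2) ∂μ := setLIntegral_mono' hAm hptA
      _ ≤ ∫⁻ q, ENNReal.ofReal (σ * Real.exp (σ * (4 * M)))
            * ENNReal.ofReal (|h q - φ₀ q| ^ 2) ∂μ := setLIntegral_le_lintegral _ _
      _ = ENNReal.ofReal (σ * Real.exp (σ * (4 * M)))
            * ∫⁻ q, ENNReal.ofReal (|h q - φ₀ q| ^ 2) ∂μ :=
          lintegral_const_mul' _ _ ENNReal.ofReal_ne_top
      _ ≤ ENNReal.ofReal (σ * Real.exp (σ * (4 * M))) * ENNReal.ofReal η := by gcongr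
      _ ≤ ENNReal.ofReal (ε / 4) := by
          rw [← ENNReal.ofReal_mul (by positivity)]
          apply ENNReal.ofReal_le_ofReal
          set D : ℝ := σ * Real.exp (σ * (4 * M)) with hDdef
          have hD : 0 < D := by positivity
          have h2 : ε / 4 / (D + 1) * (D + 1) = ε / 4 := div_mul_cancel₀ _ (by positivity)
          have h3 : 0 ≤ ε / 4 / (D + 1) := by positivity
          rw [hηdef]
          nlinarith
  have htail : ∫⁻ q in Aᶜ, F q ∂μ ≤ ENNReal.ofReal (ε / 4) := by
    have hsub : Aᶜ ⊆ K₀ := by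
      intro q hq
      have h1 : ¬(|h q| ≤ 2 * M) := hq
      have h2 : 2 * M < |h q| := not_le.mp h1
      show 1 < |h q|
      linarith
    have hpt : ∀ q ∈ Aᶜ, F q ≤ ENNReal.ofReal (4 / σ * Real.exp (-(2 * σ) * M))
        * ENNReal.ofReal (Real.exp (5 * σ * |h q|)) := by
      intro q hq
      have hq' : 2 * M < |h q| := not_le.mp hq
      rw [hFdef, ← ENNReal.ofReal_mul (by positivity)]
      exact ENNReal.ofReal_le_ofReal (tail_pt σ M (h q) (φ q) hσ hM1 (hφbd q) hq')
    calc ∫⁻ q in Aᶜ, F q ∂μ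
        ≤ ∫⁻ q in Aᶜ, ENNReal.ofReal (4 / σ * Real.exp (-(2 * σ) * M))
            * ENNReal.ofReal (Real.exp (5 * σ * |h q|)) ∂μ := setLIntegral_mono' hAm.compl hpt
      _ = ENNReal.ofReal (4 / σ * Real.exp (-(2 * σ) * M))
            * ∫⁻ q in Aᶜ, ENNReal.ofReal (Real.exp (5 * σ * |h q|)) ∂μ :=
          lintegral_const_mul' _ _ ENNReal.ofReal_ne_top
      _ ≤ ENNReal.ofReal (4 / σ * Real.exp (-(2 * σ) * M)) * C₀ := by
          gcongr
          exact lintegral_mono_set hsub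
      _ ≤ ENNReal.ofReal (ε / 4) := hMbound
  calc ENNReal.ofReal (Υ / σ) + ∫⁻ q, F q ∂μ
      ≤ ENNReal.ofReal (ε / 2) + (ENNReal.ofReal (ε / 4) + ENNReal.ofReal (ε / 4)) := by
        rw [hΥσ, hsplit]
        gcongr
    _ = ENNReal.ofReal ε := by
        rw [← ENNReal.ofReal_add (by positivity) (by positivity),
          ← ENNReal.ofReal_add (by positivity) (by positivity)]
        congr 1
        ring


set_option maxHeartbeats 1000000 in
/-- if `g_n, g ∈ S^Υ` and `∫ φ g_n dν_T → ∫ φ g dν_T` for every continuous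
compactly supported `φ`, then
`∫ h (g_n − 1) dν_T → ∫ h (g − 1) dν_T`. -/
theorem statement8 {Z : Type*}
    [TopologicalSpace Z] [PolishSpace Z] [LocallyCompactSpace Z]
    [MeasurableSpace Z] [BorelSpace Z]
    (T : ℝ) (hT : 0 < T)
    (ν : Measure Z) [IsFiniteMeasureOnCompacts ν]
    (Υ : ℝ) (hΥ : 0 < Υ)
    (h : ℝ × Z → ℝ) (hmeas : Measurable h)
    -- `∫ |h|² dν_T < ∞`
    (hL2 : ∫⁻ q, ENNReal.ofReal (|h q| ^ 2) ∂(nuT T ν) < ∞)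
    -- exponential integrability of `|h|` on sets of finite measure
    (hexp : ∀ δ > (0:ℝ), ∀ K : Set (ℝ × Z), MeasurableSet K → nuT T ν K < ∞ →
      ∫⁻ q in K, ENNReal.ofReal (Real.exp (δ * |h q|)) ∂(nuT T ν) < ∞)
    (gn : ℕ → ℝ × Z → ℝ) (g : ℝ × Z → ℝ)
    (hgn : ∀ n, gn n ∈ entS (nuT T ν) Υ) (hg : g ∈ entS (nuT T ν) Υ)
    -- `g_n → g` against continuous compactly supported test functions
    (hconv : ∀ φ : ℝ × Z → ℝ, Continuous φ → HasCompactSupport φ →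
      Tendsto (fun n => ∫ q, φ q * gn n q ∂(nuT T ν)) atTop
        (𝓝 (∫ q, φ q * g q ∂(nuT T ν)))) :
    Tendsto (fun n => ∫ q, h q * (gn n q - 1) ∂(nuT T ν)) atTop
      (𝓝 (∫ q, h q * (g q - 1) ∂(nuT T ν))) := by
  haveI hreg : (nuT T ν).Regular := by unfold nuT; infer_instance
  haveI hfc : IsFiniteMeasureOnCompacts (nuT T ν) := by unfold nuT; infer_instance
  set μ := nuT T ν with hμdef
  rw [Metric.tendsto_atTop]
  intro ε hε
  obtain ⟨φ, hφcont, hφsupp, ⟨C, hC0, hφbd⟩, hφapprox⟩ :=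
    uniform_approx μ Υ hΥ h hmeas hL2 hexp (ε / 4) (by positivity)
  set K := tsupport φ with hKdef
  have hKm : MeasurableSet K := (isClosed_tsupport φ).measurableSet
  have hKfin : μ K < ∞ := hφsupp.measure_lt_top
  have hφm : Measurable φ := hφcont.measurable
  -- key facts for each g ∈ S^Υ
  have key : ∀ G, G ∈ entS μ Υ →
      (∫ q, h q * (G q - 1) ∂μ =
        (∫ q, (h q - φ q) * (G q - 1) ∂μ) + ((∫ q, φ q * G q ∂μ) - ∫ q, φ q ∂μ)) ∧
      |∫ q, (h q - φ q) * (G q - 1) ∂μ| ≤ ε / 4 := by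
    intro G hG
    have hGm : Measurable G := hG.1
    have hG0 : ∀ x, 0 ≤ G x := hG.2.1
    have hI1 : Integrable (fun q => (h q - φ q) * (G q - 1)) μ := by
      refine ⟨((hmeas.sub hφm).mul (hGm.sub measurable_const)).aestronglyMeasurable, ?_⟩
      rw [hasFiniteIntegral_iff_norm]
      have heq : ∀ q, ENNReal.ofReal ‖(h q - φ q) * (G q - 1)‖
          = ENNReal.ofReal (|h q - φ q| * |G q - 1|) := by
        intro q; rw [Real.norm_eq_abs, abs_mul]
      calc ∫⁻ q, ENNReal.ofReal ‖(h q - φ q) * (G q - 1)‖ ∂μ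
          = ∫⁻ q, ENNReal.ofReal (|h q - φ q| * |G q - 1|) ∂μ := lintegral_congr heq
        _ ≤ ENNReal.ofReal (ε / 4) := hφapprox G hG
        _ < ∞ := ENNReal.ofReal_lt_top
    have hI2 : Integrable (fun q => φ q * (G q - 1)) μ := by
      refine integrable_of_dom μ Υ C hC0 G hG K hKm hKfin _ (hφm.mul (hGm.sub measurable_const))
        (fun q _ => ?_) (fun q hq => by simp [image_eq_zero_of_notMem_tsupport hq])
      rw [abs_mul]
      have h1 : |G q - 1| ≤ G q + 1 := by
        rcases abs_cases (G q - 1) with ⟨he, -⟩ | ⟨he, -⟩ <;> rw [he] <;> nlinarith [hG0 q]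
      exact mul_le_mul (hφbd q) h1 (abs_nonneg _) hC0
    have hI3 : Integrable (fun q => φ q * G q) μ := by
      refine integrable_of_dom μ Υ C hC0 G hG K hKm hKfin _ (hφm.mul hGm)
        (fun q _ => ?_) (fun q hq => by simp [image_eq_zero_of_notMem_tsupport hq])
      rw [abs_mul, abs_of_nonneg (hG0 q)]
      exact mul_le_mul (hφbd q) (by linarith [hG0 q]) (hG0 q) hC0
    have hI4 : Integrable φ μ := hφcont.integrable_of_hasCompactSupport hφsupp
    constructor
    · have e1 : (fun q => h q * (G q - 1))
          = fun q => (h q - φ q) * (G q - 1) + φ q * (G q - 1) := by funext q; ring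
      have e2 : (fun q => φ q * (G q - 1)) = fun q => φ q * G q - φ q := by funext q; ring
      rw [e1, integral_add hI1 hI2, e2, integral_sub hI3 hI4]
    · have hnorm := norm_integral_le_lintegral_norm (μ := μ)
        (f := fun q => (h q - φ q) * (G q - 1))
      rw [Real.norm_eq_abs] at hnorm
      refine hnorm.trans ?_
      have heq : ∀ q, ENNReal.ofReal ‖(h q - φ q) * (G q - 1)‖
          = ENNReal.ofReal (|h q - φ q| * |G q - 1|) := by
        intro q; rw [Real.norm_eq_abs, abs_mul]
      rw [lintegral_congr heq]
      calc (∫⁻ q, ENNReal.ofReal (|h q - φ q| * |G q - 1|) ∂μ).toReal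
          ≤ (ENNReal.ofReal (ε / 4)).toReal :=
            ENNReal.toReal_mono ENNReal.ofReal_ne_top (hφapprox G hG)
        _ = ε / 4 := ENNReal.toReal_ofReal (by positivity)
  obtain ⟨N, hN⟩ := Metric.tendsto_atTop.mp (hconv φ hφcont hφsupp) (ε / 4) (by positivity)
  refine ⟨N, fun n hn => ?_⟩
  obtain ⟨heqn, hbn⟩ := key (gn n) (hgn n)
  obtain ⟨heqg, hbg⟩ := key g hg
  rw [Real.dist_eq, heqn, heqg]
  have hBn := hN n hn
  rw [Real.dist_eq] at hBn
  set An := ∫ q, (h q - φ q) * (gn n q - 1) ∂μ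
  set Ag := ∫ q, (h q - φ q) * (g q - 1) ∂μ
  set Bn := ∫ q, φ q * gn n q ∂μ
  set Bg := ∫ q, φ q * g q ∂μ
  set c := ∫ q, φ q ∂μ
  have e3 : An + (Bn - c) - (Ag + (Bg - c)) = (An - Ag) + (Bn - Bg) := by ring
  rw [e3]
  calc |An - Ag + (Bn - Bg)| ≤ |An - Ag| + |Bn - Bg| := abs_add_le _ _
    _ ≤ |An| + |Ag| + |Bn - Bg| := by linarith [abs_sub An Ag]
    _ < ε := by linarith
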